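/- Let d ≥ 1, b > 0, and let F : (Fin d → ℝ) → ℝ be supermodular on the nonnegative cone, i.e. for all indices i ≠ j, all reals h, k > 0, and every y with all coordinates nonnegative: F(y + h·e_i + k·e_j) + F(y) ≥ F(y + h·e_i) + F(y + k·e_j). Define D : ℝ × (Fin d → ℝ) → ℝ by D(y₀, y) = y₀^b · ( F(y) − Σ_{i=1}^{d} F(y_i·e_i) ), where y_i·e_i denotes the vector with i-th coordinate y_i and all other coordinates 0. Then D is supermodular on the nonnegative cone of ℝ^{1+d}: for any two distinct coordinates of the vector (y₀, y₁, …, y_d), any increments h, k > 0, and any (y₀, y) with y₀ ≥ 0 and all y_i ≥ 0, the corresponding supermodularity inequality holds for D. -/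
import Mathlib


/-- A function `G : ℝ^m → ℝ` is supermodular on the nonnegative cone if for all distinct
coordinates `i ≠ j`, all increments `h, k > 0` and every `y` with nonnegative coordinates,
`G(y + h·e_i + k·e_j) + G(y) ≥ G(y + h·e_i) + G(y + k·e_j)`. -/
def SupermodularOnNonnegCone {m : ℕ} (G : (Fin m → ℝ) → ℝ) : Prop :=
  ∀ i j : Fin m, i ≠ j → ∀ h k : ℝ, 0 < h → 0 < k →
    ∀ y : Fin m → ℝ, (∀ s, 0 ≤ y s) →
      G (y + Pi.single i h) + G (y + Pi.single j k) ≤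
        G (y + Pi.single i h + Pi.single j k) + G y

/-- if `F : ℝ^d → ℝ` is supermodular on the nonnegative cone and `b > 0`,
then `D(y₀, y) = y₀^b (F(y) − Σ_i F(y_i e_i))` is supermodular on the nonnegative cone of
`ℝ^{1+d}` (coordinate `0` playing the role of `y₀`). -/
lemma diff_mono {d : ℕ} {F : (Fin d → ℝ) → ℝ} (hF : SupermodularOnNonnegCone F)
    (i : Fin d) (k : ℝ) (hk : 0 < k) (y : Fin d → ℝ) (hy : ∀ s, 0 ≤ y s) :
    F (Pi.single i (y i + k)) - F (Pi.single i (y i)) ≤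
      F (y + Pi.single i k) - F y := by
  have key : ∀ S : Finset (Fin d), i ∉ S →
      F (Pi.single i (y i + k)) - F (Pi.single i (y i)) ≤
        F ((fun s => if s = i ∨ s ∈ S then y s else 0) + Pi.single i k)
          - F (fun s => if s = i ∨ s ∈ S then y s else 0) := by
    intro S
    induction S using Finset.induction_on with
    | empty =>
      intro _
      have h1 : (fun s => if s = i ∨ s ∈ (∅ : Finset (Fin d)) then y s else 0)
          = Pi.single i (y i) := by
        funext s; by_cases hs : s = i <;> simp [hs, Pi.single_apply]
      rw [h1, ← Pi.single_add]
    | @insert t S htS ih =>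
      intro hins
      simp only [Finset.mem_insert, not_or] at hins
      obtain ⟨hit, hiS⟩ := hins
      have hti : t ≠ i := fun h => hit h.symm
      have hvins : (fun s => if s = i ∨ s ∈ insert t S then y s else 0)
          = (fun s => if s = i ∨ s ∈ S then y s else 0) + Pi.single t (y t) := by
        funext s
        by_cases hst : s = t
        · subst hst
          simp [hti, htS, Pi.single_apply]
        · simp [Pi.single_apply, hst, Finset.mem_insert]
      rcases eq_or_lt_of_le (hy t) with h0 | h0
      · have : (fun s => if s = i ∨ s ∈ insert t S then y s else 0)
            = (fun s => if s = i ∨ s ∈ S then y s else 0) := by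
          rw [hvins, ← h0]; simp
        rw [this]; exact ih hiS
      · have hsup := hF i t hit k (y t) hk h0
          (fun s => if s = i ∨ s ∈ S then y s else 0)
          (fun s => by by_cases hs : s = i ∨ s ∈ S <;> simp [hs, hy s])
        rw [hvins]
        have hcomm : (fun s => if s = i ∨ s ∈ S then y s else 0) + Pi.single t (y t) + Pi.single i k
            = (fun s => if s = i ∨ s ∈ S then y s else 0) + Pi.single i k + Pi.single t (y t) := by
          abel
        rw [hcomm]
        have := ih hiS
        linarith
  have huniv : (fun s => if s = i ∨ s ∈ Finset.univ.erase i then y s else 0) = y := by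
    funext s; by_cases hs : s = i <;> simp [hs]
  have := key (Finset.univ.erase i) (Finset.notMem_erase i _)
  rwa [huniv] at this

lemma Gmono {d : ℕ} {F : (Fin d → ℝ) → ℝ} (hF : SupermodularOnNonnegCone F)
    (j : Fin d) (k : ℝ) (hk : 0 < k) (y : Fin d → ℝ) (hy : ∀ s, 0 ≤ y s) :
    F y - ∑ s, F (Pi.single s (y s)) ≤
      F (y + Pi.single j k) - ∑ s, F (Pi.single s ((y + Pi.single j k : Fin d → ℝ) s)) := by
  have hsum : ∑ s, F (Pi.single s ((y + Pi.single j k : Fin d → ℝ) s)) - ∑ s, F (Pi.single s (y s))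
      = F (Pi.single j (y j + k)) - F (Pi.single j (y j)) := by
    rw [← Finset.sum_sub_distrib]
    rw [Finset.sum_eq_single j]
    · simp
    · intro s _ hs
      have : (y + Pi.single j k : Fin d → ℝ) s = y s := by simp [Pi.single_apply, hs]
      rw [this]; ring
    · simp
  have := diff_mono hF j k hk y hy
  linarith

lemma sumid {d : ℕ} (F : (Fin d → ℝ) → ℝ) (i j : Fin d) (hij : i ≠ j) (h k : ℝ)
    (y : Fin d → ℝ) :
    ∑ s, F (Pi.single s ((y + Pi.single i h + Pi.single j k : Fin d → ℝ) s)) + ∑ s, F (Pi.single s (y s))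
      = ∑ s, F (Pi.single s ((y + Pi.single i h : Fin d → ℝ) s)) + ∑ s, F (Pi.single s ((y + Pi.single j k : Fin d → ℝ) s)) := by
  rw [← Finset.sum_add_distrib, ← Finset.sum_add_distrib]
  apply Finset.sum_congr rfl
  intro s _
  have hji : j ≠ i := fun hh => hij hh.symm
  simp only [Pi.add_apply, Pi.single_apply]
  by_cases hsi : s = i
  · simp [hsi, hij, hji]; try ring
  · by_cases hsj : s = j
    · simp [hsj, hij, hji, hsi]; try ring
    · simp [hsi, hsj]; try ring

lemma caseA {d : ℕ} (b : ℝ) (hb : 0 < b) {F : (Fin d → ℝ) → ℝ} (hF : SupermodularOnNonnegCone F)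
    (a h k : ℝ) (ha : 0 ≤ a) (hpos : 0 < h) (kpos : 0 < k) (j' : Fin d)
    (y : Fin d → ℝ) (hynn : ∀ s, 0 ≤ y s) :
    (a + h) ^ b * (F y - ∑ s, F (Pi.single s (y s)))
      + a ^ b * (F (y + Pi.single j' k) - ∑ s, F (Pi.single s ((y + Pi.single j' k : Fin d → ℝ) s)))
    ≤ (a + h) ^ b * (F (y + Pi.single j' k) - ∑ s, F (Pi.single s ((y + Pi.single j' k : Fin d → ℝ) s)))
      + a ^ b * (F y - ∑ s, F (Pi.single s (y s))) := by
  have hm := Gmono hF j' k kpos y hynn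
  have hr : a ^ b ≤ (a + h) ^ b := Real.rpow_le_rpow ha (by linarith) hb.le
  nlinarith [mul_nonneg (sub_nonneg.2 hr) (sub_nonneg.2 hm)]

lemma caseB {d : ℕ} (b : ℝ) (hb : 0 < b) {F : (Fin d → ℝ) → ℝ} (hF : SupermodularOnNonnegCone F)
    (a h k : ℝ) (ha : 0 ≤ a) (hpos : 0 < h) (kpos : 0 < k) (i' : Fin d)
    (y : Fin d → ℝ) (hynn : ∀ s, 0 ≤ y s) :
    a ^ b * (F (y + Pi.single i' h) - ∑ s, F (Pi.single s ((y + Pi.single i' h : Fin d → ℝ) s)))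
      + (a + k) ^ b * (F y - ∑ s, F (Pi.single s (y s)))
    ≤ (a + k) ^ b * (F (y + Pi.single i' h) - ∑ s, F (Pi.single s ((y + Pi.single i' h : Fin d → ℝ) s)))
      + a ^ b * (F y - ∑ s, F (Pi.single s (y s))) := by
  have hm := Gmono hF i' h hpos y hynn
  have hr : a ^ b ≤ (a + k) ^ b := Real.rpow_le_rpow ha (by linarith) hb.le
  nlinarith [mul_nonneg (sub_nonneg.2 hr) (sub_nonneg.2 hm)]

lemma caseC {d : ℕ} (b : ℝ) (hb : 0 < b) {F : (Fin d → ℝ) → ℝ} (hF : SupermodularOnNonnegCone F)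
    (a h k : ℝ) (ha : 0 ≤ a) (hpos : 0 < h) (kpos : 0 < k) (i' j' : Fin d) (hij : i' ≠ j')
    (y : Fin d → ℝ) (hynn : ∀ s, 0 ≤ y s) :
    a ^ b * (F (y + Pi.single i' h) - ∑ s, F (Pi.single s ((y + Pi.single i' h : Fin d → ℝ) s)))
      + a ^ b * (F (y + Pi.single j' k) - ∑ s, F (Pi.single s ((y + Pi.single j' k : Fin d → ℝ) s)))
    ≤ a ^ b * (F (y + Pi.single i' h + Pi.single j' k)
        - ∑ s, F (Pi.single s ((y + Pi.single i' h + Pi.single j' k : Fin d → ℝ) s)))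
      + a ^ b * (F y - ∑ s, F (Pi.single s (y s))) := by
  have hsup := hF i' j' hij h k hpos kpos y hynn
  have hsum := sumid F i' j' hij h k y
  have hab : (0:ℝ) ≤ a ^ b := Real.rpow_nonneg ha b
  nlinarith [mul_le_mul_of_nonneg_left (by linarith [hsup, hsum] :
    (F (y + Pi.single i' h) - ∑ s, F (Pi.single s ((y + Pi.single i' h : Fin d → ℝ) s)))
      + (F (y + Pi.single j' k) - ∑ s, F (Pi.single s ((y + Pi.single j' k : Fin d → ℝ) s)))
    ≤ (F (y + Pi.single i' h + Pi.single j' k)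
        - ∑ s, F (Pi.single s ((y + Pi.single i' h + Pi.single j' k : Fin d → ℝ) s)))
      + (F y - ∑ s, F (Pi.single s (y s)))) hab]


theorem stmt5 (d : ℕ) (hd : 1 ≤ d) (b : ℝ) (hb : 0 < b)
    (F : (Fin d → ℝ) → ℝ) (hF : SupermodularOnNonnegCone F) :
    SupermodularOnNonnegCone (fun v : Fin (d + 1) → ℝ =>
      v 0 ^ b * (F (fun i => v i.succ) - ∑ i, F (Pi.single i (v i.succ)))) := by
  intro i j hij h k hpos kpos v hv
  simp only
  have hynn : ∀ s : Fin d, 0 ≤ v s.succ := fun s => hv s.succ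
  have ha : 0 ≤ v 0 := hv 0
  rcases Fin.eq_zero_or_eq_succ i with rfl | ⟨i', rfl⟩
  · rcases Fin.eq_zero_or_eq_succ j with rfl | ⟨j', rfl⟩
    · exact absurd rfl hij
    · have e1 : ∀ s : Fin d, (v + Pi.single (0 : Fin (d+1)) h : Fin (d+1) → ℝ) s.succ = v s.succ := by
        intro s; simp [Pi.single_apply, Fin.succ_ne_zero]
      have e2 : (v + Pi.single (0 : Fin (d+1)) h : Fin (d+1) → ℝ) 0 = v 0 + h := by simp
      have e3 : ∀ s : Fin d, (v + Pi.single (Fin.succ j') k : Fin (d+1) → ℝ) s.succ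
          = v s.succ + (Pi.single j' k : Fin d → ℝ) s := by
        intro s; simp [Pi.single_apply, Fin.succ_inj]
      have e4 : (v + Pi.single (Fin.succ j') k : Fin (d+1) → ℝ) 0 = v 0 := by
        simp [Pi.single_apply, (Fin.succ_ne_zero j').symm]
      have e5 : ∀ s : Fin d, (v + Pi.single (0 : Fin (d+1)) h + Pi.single (Fin.succ j') k : Fin (d+1) → ℝ) s.succ
          = v s.succ + (Pi.single j' k : Fin d → ℝ) s := by
        intro s; simp [Pi.single_apply, Fin.succ_ne_zero, Fin.succ_inj]
      have e6 : (v + Pi.single (0 : Fin (d+1)) h + Pi.single (Fin.succ j') k : Fin (d+1) → ℝ) 0 = v 0 + h := by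
        simp [Pi.single_apply, (Fin.succ_ne_zero j').symm]
      simp only [e1, e2, e3, e4, e5, e6]
      exact caseA b hb hF (v 0) h k ha hpos kpos j' (fun s => v s.succ) hynn
  · rcases Fin.eq_zero_or_eq_succ j with rfl | ⟨j', rfl⟩
    · have e1 : ∀ s : Fin d, (v + Pi.single (Fin.succ i') h : Fin (d+1) → ℝ) s.succ
          = v s.succ + (Pi.single i' h : Fin d → ℝ) s := by
        intro s; simp [Pi.single_apply, Fin.succ_inj]
      have e2 : (v + Pi.single (Fin.succ i') h : Fin (d+1) → ℝ) 0 = v 0 := by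
        simp [Pi.single_apply, (Fin.succ_ne_zero i').symm]
      have e3 : ∀ s : Fin d, (v + Pi.single (0 : Fin (d+1)) k : Fin (d+1) → ℝ) s.succ = v s.succ := by
        intro s; simp [Pi.single_apply, Fin.succ_ne_zero]
      have e4 : (v + Pi.single (0 : Fin (d+1)) k : Fin (d+1) → ℝ) 0 = v 0 + k := by simp
      have e5 : ∀ s : Fin d, (v + Pi.single (Fin.succ i') h + Pi.single (0 : Fin (d+1)) k : Fin (d+1) → ℝ) s.succ
          = v s.succ + (Pi.single i' h : Fin d → ℝ) s := by
        intro s; simp [Pi.single_apply, Fin.succ_ne_zero, Fin.succ_inj]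
      have e6 : (v + Pi.single (Fin.succ i') h + Pi.single (0 : Fin (d+1)) k : Fin (d+1) → ℝ) 0 = v 0 + k := by
        simp [Pi.single_apply, (Fin.succ_ne_zero i').symm]
      simp only [e1, e2, e3, e4, e5, e6]
      exact caseB b hb hF (v 0) h k ha hpos kpos i' (fun s => v s.succ) hynn
    · have hij' : i' ≠ j' := fun hh => hij (by rw [hh])
      have e1 : ∀ s : Fin d, (v + Pi.single (Fin.succ i') h : Fin (d+1) → ℝ) s.succ
          = v s.succ + (Pi.single i' h : Fin d → ℝ) s := by
        intro s; simp [Pi.single_apply, Fin.succ_inj]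
      have e2 : (v + Pi.single (Fin.succ i') h : Fin (d+1) → ℝ) 0 = v 0 := by
        simp [Pi.single_apply, (Fin.succ_ne_zero i').symm]
      have e3 : ∀ s : Fin d, (v + Pi.single (Fin.succ j') k : Fin (d+1) → ℝ) s.succ
          = v s.succ + (Pi.single j' k : Fin d → ℝ) s := by
        intro s; simp [Pi.single_apply, Fin.succ_inj]
      have e4 : (v + Pi.single (Fin.succ j') k : Fin (d+1) → ℝ) 0 = v 0 := by
        simp [Pi.single_apply, (Fin.succ_ne_zero j').symm]
      have e5 : ∀ s : Fin d, (v + Pi.single (Fin.succ i') h + Pi.single (Fin.succ j') k : Fin (d+1) → ℝ) s.succ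
          = v s.succ + (Pi.single i' h : Fin d → ℝ) s + (Pi.single j' k : Fin d → ℝ) s := by
        intro s; simp [Pi.single_apply, Fin.succ_inj]
      have e6 : (v + Pi.single (Fin.succ i') h + Pi.single (Fin.succ j') k : Fin (d+1) → ℝ) 0 = v 0 := by
        simp [Pi.single_apply, (Fin.succ_ne_zero i').symm, (Fin.succ_ne_zero j').symm]
      simp only [e1, e2, e3, e4, e5, e6]
      exact caseC b hb hF (v 0) h k ha hpos kpos i' j' hij' (fun s => v s.succ) hynn
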